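/- Let G be a k-regular simple graph on N vertices with averaging matrix A, let β̄ = (1/N)∑_{i=1}^N β_i, and let σ₂ ≥ 0 satisfy ‖Ax‖₂ ≤ σ₂‖x‖₂ for every x ∈ ℝ^N with ∑_i x_i = 0. Then for every β ∈ ℝ^N, (1 − σ₂²)·((k+1)/N)·∑_{i=1}^N (β_i − β̄)² ≤ max_{1 ≤ i ≤ N} ∑_{l ∈ {i} ∪ 𝒩_i} (β_l − (Aβ)_i)². -/

import Mathlib

noncomputable section

/-- The local consensus subspace `B_i = {β : β_i = β_k for all neighbors k of i}`. -/
def localConsensus {N : ℕ} (G : SimpleGraph (Fin N)) (i : Fin N) :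
    Submodule ℝ (EuclideanSpace ℝ (Fin N)) where
  carrier := {β | ∀ k, G.Adj i k → β i = β k}
  zero_mem' := by intro k _; rfl
  add_mem' := by
    intro a b ha hb k hk
    simp only [Set.mem_setOf_eq] at *
    simp [PiLp.add_apply, ha k hk, hb k hk]
  smul_mem' := by
    intro c a ha k hk
    simp only [Set.mem_setOf_eq] at *
    simp [PiLp.smul_apply, ha k hk]

/-- The averaging matrix of a `k`-regular graph: `A i j = 1/(k+1)` if `j = i` or `j ∈ 𝒩 i`. -/
def avgMatrix {N : ℕ} (G : SimpleGraph (Fin N)) [DecidableRel G.Adj] (k : ℕ) :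
    Matrix (Fin N) (Fin N) ℝ :=
  Matrix.of fun i j => if j = i ∨ G.Adj i j then (1 : ℝ) / (k + 1) else 0

/-- for a `k`-regular graph with averaging matrix `A` and `σ₂ ≥ 0` bounding
`‖Ax‖₂ ≤ σ₂‖x‖₂` on the zero-sum subspace,
`(1 − σ₂²)((k+1)/N) ∑ᵢ (βᵢ − bbar)² ≤ maxᵢ ∑_{l ∈ {i} ∪ 𝒩ᵢ} (β_l − (Aβ)ᵢ)²`. -/
theorem regularity_bound_sums {N k : ℕ} (G : SimpleGraph (Fin N)) [DecidableRel G.Adj]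
    (hreg : G.IsRegularOfDegree k) (σ₂ : ℝ) (hσ₂ : 0 ≤ σ₂)
    (hσ : ∀ x : EuclideanSpace ℝ (Fin N), (∑ i, x i) = 0 →
      ‖Matrix.toEuclideanLin (avgMatrix G k) x‖ ≤ σ₂ * ‖x‖)
    (β : Fin N → ℝ) :
    (1 - σ₂ ^ 2) * (((k : ℝ) + 1) / N) * ∑ i, (β i - (∑ l, β l) / N) ^ 2 ≤
      ⨆ i : Fin N,
        ∑ l ∈ insert i (G.neighborFinset i), (β l - (avgMatrix G k).mulVec β i) ^ 2 := by
  rcases Nat.eq_zero_or_pos N with hN | hN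
  · subst hN
    simp [ciSup_of_empty, Real.sSup_empty]
  have hNpos : (0 : ℝ) < N := by exact_mod_cast hN
  have : Nonempty (Fin N) := ⟨⟨0, hN⟩⟩
  set bbar : ℝ := (∑ l, β l) / N with hbbar
  set x : Fin N → ℝ := fun i => β i - bbar with hx
  set T : Fin N → Finset (Fin N) := fun i => insert i (G.neighborFinset i) with hTdef
  have hk1 : (0 : ℝ) < (k : ℝ) + 1 := by positivity
  have hcard : ∀ i, (T i).card = k + 1 := by
    intro i
    rw [hTdef]
    rw [Finset.card_insert_of_notMem (by simp), SimpleGraph.card_neighborFinset_eq_degree, hreg i]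
  have hmem : ∀ i l : Fin N, l ∈ T i ↔ i ∈ T l := by
    intro i l
    simp only [hTdef, Finset.mem_insert, SimpleGraph.mem_neighborFinset]
    constructor
    · rintro (h | h); · exact Or.inl h.symm
      · exact Or.inr h.symm
    · rintro (h | h); · exact Or.inl h.symm
      · exact Or.inr h.symm
  have hT : ∀ i, Finset.univ.filter (fun j => j = i ∨ G.Adj i j) = T i := by
    intro i; ext j; simp [hTdef]
  have hmul : ∀ (y : Fin N → ℝ) (i : Fin N),
      (avgMatrix G k).mulVec y i = (∑ l ∈ T i, y l) / ((k : ℝ) + 1) := by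
    intro y i
    simp only [Matrix.mulVec, dotProduct, avgMatrix, Matrix.of_apply, ite_mul, zero_mul]
    rw [← Finset.sum_filter, hT i, Finset.sum_div]
    exact Finset.sum_congr rfl fun l _ => by ring
  set a : Fin N → ℝ := (avgMatrix G k).mulVec x with ha
  have hsumT : ∀ i, ∑ l ∈ T i, x l = ((k : ℝ) + 1) * a i := by
    intro i; rw [ha, hmul x i, mul_div_cancel₀ _ (ne_of_gt hk1)]
  -- A applied to β equals a + bbar
  have hAβ : ∀ i, (avgMatrix G k).mulVec β i = a i + bbar := by
    intro i
    rw [hmul β i]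
    have : ∀ l ∈ T i, β l = x l + bbar := fun l _ => by simp [hx]
    rw [Finset.sum_congr rfl this, Finset.sum_add_distrib, Finset.sum_const, hcard i,
      hsumT i, nsmul_eq_mul]
    push_cast
    field_simp
  -- each local sum
  have hS : ∀ i, ∑ l ∈ T i, (β l - (avgMatrix G k).mulVec β i) ^ 2
      = (∑ l ∈ T i, (x l) ^ 2) - ((k : ℝ) + 1) * (a i) ^ 2 := by
    intro i
    have h1 : ∀ l ∈ T i, (β l - (avgMatrix G k).mulVec β i) ^ 2
        = (x l) ^ 2 - 2 * a i * x l + (a i) ^ 2 := by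
      intro l _
      rw [hAβ i]
      simp only [hx]
      ring
    rw [Finset.sum_congr rfl h1, Finset.sum_add_distrib, Finset.sum_sub_distrib,
      ← Finset.mul_sum, Finset.sum_const, hcard i, nsmul_eq_mul, hsumT i]
    push_cast
    ring
  -- sum over i of the x² part
  have hswap : ∑ i, ∑ l ∈ T i, (x l) ^ 2 = ((k : ℝ) + 1) * ∑ l, (x l) ^ 2 := by
    have h1 : ∀ i, ∑ l ∈ T i, (x l) ^ 2 = ∑ l, if l ∈ T i then (x l) ^ 2 else 0 := by
      intro i
      rw [Finset.sum_ite_mem, Finset.univ_inter]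
    simp_rw [h1]
    rw [Finset.sum_comm]
    have h2 : ∀ l : Fin N, (∑ i, if l ∈ T i then (x l) ^ 2 else 0) = ((k : ℝ) + 1) * (x l) ^ 2 := by
      intro l
      simp_rw [hmem _ l]
      rw [Finset.sum_ite_mem, Finset.univ_inter, Finset.sum_const, hcard l, nsmul_eq_mul]
      push_cast; ring
    rw [Finset.sum_congr rfl fun l _ => h2 l, ← Finset.mul_sum]
  -- spectral bound
  have hxe : (∑ i, ((WithLp.equiv 2 (Fin N → ℝ)).symm x) i) = 0 := by
    simp only [WithLp.equiv_symm_apply, PiLp.toLp_apply, hx]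
    rw [Finset.sum_sub_distrib, Finset.sum_const, nsmul_eq_mul, hbbar]
    field_simp
    simp
  have hbound := hσ ((WithLp.equiv 2 (Fin N → ℝ)).symm x) hxe
  rw [WithLp.equiv_symm_apply, Matrix.toEuclideanLin_apply_piLp_toLp, ← WithLp.equiv_symm_apply] at hbound
  have hnorm : ∀ y : Fin N → ℝ,
      ‖(WithLp.equiv 2 (Fin N → ℝ)).symm y‖ ^ 2 = ∑ i, (y i) ^ 2 := by
    intro y
    rw [EuclideanSpace.norm_eq]
    rw [Real.sq_sqrt (by positivity)]
    exact Finset.sum_congr rfl fun i _ => by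
      simp [WithLp.equiv_symm_apply, PiLp.toLp_apply, Real.norm_eq_abs, sq_abs]
  have hsq : ∑ i, (a i) ^ 2 ≤ σ₂ ^ 2 * ∑ i, (x i) ^ 2 := by
    have h1 := pow_le_pow_left₀ (norm_nonneg _) hbound 2
    rw [mul_pow, hnorm, hnorm] at h1
    rw [ha]
    exact h1
  -- sum of all local sums
  have htotal : ((k : ℝ) + 1) * (1 - σ₂ ^ 2) * ∑ i, (x i) ^ 2
      ≤ ∑ i, ∑ l ∈ T i, (β l - (avgMatrix G k).mulVec β i) ^ 2 := by
    rw [Finset.sum_congr rfl fun i _ => hS i, Finset.sum_sub_distrib, hswap, ← Finset.mul_sum]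
    nlinarith [hsq]
  -- sup bound
  set M : ℝ := ⨆ i : Fin N, ∑ l ∈ T i, (β l - (avgMatrix G k).mulVec β i) ^ 2 with hM
  have hle : ∀ i, ∑ l ∈ T i, (β l - (avgMatrix G k).mulVec β i) ^ 2 ≤ M :=
    fun i => le_ciSup (f := fun i => ∑ l ∈ T i, (β l - (avgMatrix G k).mulVec β i) ^ 2)
      (Set.Finite.bddAbove (Set.finite_range _)) i
  have hsumM : ∑ i, ∑ l ∈ T i, (β l - (avgMatrix G k).mulVec β i) ^ 2 ≤ (N : ℝ) * M := by
    calc ∑ i, ∑ l ∈ T i, (β l - (avgMatrix G k).mulVec β i) ^ 2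
        ≤ ∑ _i : Fin N, M := Finset.sum_le_sum fun i _ => hle i
      _ = (N : ℝ) * M := by rw [Finset.sum_const, nsmul_eq_mul, Finset.card_univ, Fintype.card_fin]
  have hfinal : ((k : ℝ) + 1) * (1 - σ₂ ^ 2) * ∑ i, (x i) ^ 2 ≤ (N : ℝ) * M :=
    le_trans htotal hsumM
  have hgoal : (1 - σ₂ ^ 2) * (((k : ℝ) + 1) / N) * ∑ i, (x i) ^ 2 ≤ M := by
    have heq : (1 - σ₂ ^ 2) * (((k : ℝ) + 1) / N) * ∑ i, (x i) ^ 2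
        = ((k : ℝ) + 1) * (1 - σ₂ ^ 2) * (∑ i, (x i) ^ 2) / N := by ring
    rw [heq, div_le_iff₀ hNpos]
    linarith [hfinal]
  exact hgoal
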